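/- Let P and Q be finite nonempty posets. The duality condition L(P,Q)^∨ = L(Q,P)^τ holds if and only if (P is connected or Q is connected) and at least one of the following holds: (i) P and Q are both rooted; (ii) P and Q are both co-rooted; (iii) P is connected and Q is a direct sum of chains; (iv) Q is connected and P is a direct sum of chains; (v) P is a chain or Q is a chain. -/

import Mathlib

open MvPolynomial

/-- The ideal `L(P,Q)` generated by the monomials `u_φ = ∏_{p∈P} x_{p,φ(p)}`
over all isotone maps `φ : P → Q`. -/
noncomputable def isoL (P Q K : Type*) [PartialOrder P] [PartialOrder Q] [Fintype P]
    [Field K] : Ideal (MvPolynomial (P × Q) K) :=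
  Ideal.span { u | ∃ φ : P →o Q, u = ∏ p : P, X (p, φ p) }

/-- The Alexander dual `L(P,Q)^∨ = ⋂_{φ} (x_{p,φ(p)} : p ∈ P)`. -/
noncomputable def isoDual (P Q K : Type*) [PartialOrder P] [PartialOrder Q]
    [Field K] : Ideal (MvPolynomial (P × Q) K) :=
  ⨅ φ : P →o Q, Ideal.span { u | ∃ p : P, u = X (p, φ p) }

/-- The ideal `L(Q,P)^τ ⊆ K[x_{pq}]` generated by `∏_{q∈Q} x_{ψ(q),q}` for `ψ ∈ Hom(Q,P)`. -/
noncomputable def isoTau (P Q K : Type*) [PartialOrder P] [PartialOrder Q] [Fintype Q]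
    [Field K] : Ideal (MvPolynomial (P × Q) K) :=
  Ideal.span { u | ∃ ψ : Q →o P, u = ∏ q : Q, X (ψ q, q) }

/-- The prime ideal `𝔭_ψ = (x_{ψ(q),q} : q ∈ Q)`. -/
noncomputable def pPsi (P Q K : Type*) [PartialOrder P] [PartialOrder Q]
    [Field K] (ψ : Q →o P) : Ideal (MvPolynomial (P × Q) K) :=
  Ideal.span { u | ∃ q : Q, u = X (ψ q, q) }

/-- The height of an ideal: the infimum of the heights (in the prime spectrum)
of the prime ideals containing it. -/
noncomputable def idealHeight {R : Type*} [CommRing R] (I : Ideal R) : ℕ∞ :=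
  ⨅ J : {J : PrimeSpectrum R // I ≤ J.asIdeal}, Order.height J.1

/-- `P` is connected: any two elements are linked by a chain of comparabilities. -/
def PosetConnected (P : Type*) [PartialOrder P] : Prop :=
  ∀ a b : P, Relation.ReflTransGen (fun x y : P => x ≤ y ∨ y ≤ x) a b

/-- `P` is rooted: two incomparable elements have no common strict upper bound. -/
def Rooted (P : Type*) [PartialOrder P] : Prop :=
  ∀ p₁ p₂ p : P, ¬ p₁ ≤ p₂ → ¬ p₂ ≤ p₁ → ¬ (p₁ < p ∧ p₂ < p)

/-- `P` is co-rooted: two incomparable elements have no common strict lower bound. -/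
def CoRooted (P : Type*) [PartialOrder P] : Prop :=
  ∀ p₁ p₂ p : P, ¬ p₁ ≤ p₂ → ¬ p₂ ≤ p₁ → ¬ (p < p₁ ∧ p < p₂)

/-- `P` is a chain, i.e. totally ordered. -/
def IsChainPoset (P : Type*) [PartialOrder P] : Prop :=
  ∀ a b : P, a ≤ b ∨ b ≤ a

lemma exists_minimal_old {α : Type*} [Preorder α] (s : Finset α) (h : s.Nonempty) :
    ∃ m ∈ s, ∀ x ∈ s, ¬ x < m := by
  obtain ⟨i, hi⟩ := s.exists_minimal h
  exact ⟨i, hi.1, fun x hx hlt => hlt.not_ge (hi.2 hx hlt.le)⟩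

lemma exists_maximal_old {α : Type*} [Preorder α] (s : Finset α) (h : s.Nonempty) :
    ∃ m ∈ s, ∀ x ∈ s, ¬ m < x := by
  obtain ⟨i, hi⟩ := s.exists_maximal h
  exact ⟨i, hi.1, fun x hx hlt => hlt.not_ge (hi.2 hx hlt.le)⟩

section Red
open scoped Classical
variable (P Q : Type*) [PartialOrder P] [PartialOrder Q] [Fintype P] [Fintype Q]
variable (K : Type*) [Field K]

/-- exponent vector of the monomial `∏_q x_{ψ(q),q}` -/
noncomputable def expE (ψ : Q →o P) : (P × Q) →₀ ℕ :=
  ∑ q : Q, Finsupp.single (ψ q, q) 1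

lemma expE_apply (ψ : Q →o P) (p : P) (q : Q) :
    expE P Q ψ (p, q) = if ψ q = p then 1 else 0 := by
  classical
  rw [expE, Finsupp.finset_sum_apply]
  rw [Finset.sum_eq_single q]
  · rw [Finsupp.single_apply]
    simp [Prod.ext_iff, eq_comm]
  · intro b _ hb
    rw [Finsupp.single_apply, if_neg]
    simp [Prod.ext_iff, hb]
  · simp

lemma expE_le_iff (ψ : Q →o P) (d : (P × Q) →₀ ℕ) :
    expE P Q ψ ≤ d ↔ ∀ q, d (ψ q, q) ≠ 0 := by
  constructor
  · intro h q
    have := h (ψ q, q)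
    rw [expE_apply, if_pos rfl] at this
    omega
  · intro h x
    rcases x with ⟨p, q⟩
    rw [expE_apply]
    split
    · next he => rw [← he]; exact Nat.one_le_iff_ne_zero.2 (h q)
    · exact Nat.zero_le _

lemma prod_X_eq (ψ : Q →o P) :
    (∏ q : Q, X (ψ q, q) : MvPolynomial (P × Q) K) = monomial (expE P Q ψ) 1 := by
  rw [expE, monomial_sum_one]
  rfl

lemma mem_isoTau_iff (f : MvPolynomial (P × Q) K) :
    f ∈ isoTau P Q K ↔ ∀ d ∈ f.support, ∃ ψ : Q →o P, ∀ q, d (ψ q, q) ≠ 0 := by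
  have hset : { u : MvPolynomial (P × Q) K | ∃ ψ : Q →o P, u = ∏ q : Q, X (ψ q, q) }
      = (fun s => monomial s (1 : K)) '' (Set.range (expE P Q)) := by
    ext u
    simp only [Set.mem_setOf_eq, Set.mem_image, Set.mem_range]
    constructor
    · rintro ⟨ψ, rfl⟩; exact ⟨expE P Q ψ, ⟨ψ, rfl⟩, (prod_X_eq P Q K ψ).symm⟩
    · rintro ⟨s, ⟨ψ, rfl⟩, rfl⟩; exact ⟨ψ, (prod_X_eq P Q K ψ).symm⟩
  rw [isoTau, hset, mem_ideal_span_monomial_image]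
  refine forall₂_congr fun d _ => ?_
  constructor
  · rintro ⟨si, ⟨ψ, rfl⟩, hle⟩
    exact ⟨ψ, (expE_le_iff P Q ψ d).1 hle⟩
  · rintro ⟨ψ, h⟩
    exact ⟨expE P Q ψ, ⟨ψ, rfl⟩, (expE_le_iff P Q ψ d).2 h⟩

lemma mem_isoDual_iff (f : MvPolynomial (P × Q) K) :
    f ∈ isoDual P Q K ↔ ∀ (φ : P →o Q), ∀ d ∈ f.support, ∃ p : P, d (p, φ p) ≠ 0 := by
  rw [isoDual, Ideal.mem_iInf]
  refine forall_congr' fun φ => ?_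
  have hset : { u : MvPolynomial (P × Q) K | ∃ p : P, u = X (p, φ p) }
      = MvPolynomial.X '' (Set.range fun p => (p, φ p)) := by
    ext u
    simp only [Set.mem_setOf_eq, Set.mem_image, Set.mem_range]
    constructor
    · rintro ⟨p, rfl⟩; exact ⟨(p, φ p), ⟨p, rfl⟩, rfl⟩
    · rintro ⟨x, ⟨p, rfl⟩, rfl⟩; exact ⟨p, rfl⟩
  rw [hset, mem_ideal_span_X_image]
  refine forall₂_congr fun d _ => ?_
  constructor
  · rintro ⟨i, ⟨p, rfl⟩, h⟩; exact ⟨p, h⟩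
  · rintro ⟨p, h⟩; exact ⟨(p, φ p), ⟨p, rfl⟩, h⟩

theorem red :
    isoDual P Q K = isoTau P Q K ↔
      ((∀ (φ : P →o Q) (ψ : Q →o P), ∃ q, φ (ψ q) = q) ∧
       (∀ S : Set (P × Q), (∀ φ : P →o Q, ∃ p, (p, φ p) ∈ S) →
          ∃ ψ : Q →o P, ∀ q, (ψ q, q) ∈ S)) := by
  classical
  constructor
  · intro h
    constructor
    · intro φ ψ
      have hτ : (monomial (expE P Q ψ) 1 : MvPolynomial (P × Q) K) ∈ isoTau P Q K := by
        rw [mem_isoTau_iff]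
        intro d hd
        have : d = expE P Q ψ := by
          have := support_monomial_subset hd
          simpa using this
        subst this
        refine ⟨ψ, fun q => ?_⟩
        rw [expE_apply, if_pos rfl]
        exact one_ne_zero
      rw [← h, mem_isoDual_iff] at hτ
      have hm : expE P Q ψ ∈ (monomial (expE P Q ψ) (1 : K)).support := by
        rw [support_monomial, if_neg one_ne_zero]
        exact Finset.mem_singleton_self _
      obtain ⟨p, hp⟩ := hτ φ _ hm
      rw [expE_apply] at hp
      have hψ : ψ (φ p) = p := by
        by_contra hc
        rw [if_neg hc] at hp
        exact hp rfl
      exact ⟨φ p, by rw [hψ]⟩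
    · intro S hS
      set d : (P × Q) →₀ ℕ :=
        Finsupp.equivFunOnFinite.symm (fun x => if x ∈ S then 1 else 0) with hd
      have hdx : ∀ x : P × Q, d x ≠ 0 ↔ x ∈ S := by
        intro x
        simp only [hd, Finsupp.coe_equivFunOnFinite_symm]
        split <;> simp_all
      have hδ : (monomial d 1 : MvPolynomial (P × Q) K) ∈ isoDual P Q K := by
        rw [mem_isoDual_iff]
        intro φ e he
        have : e = d := by simpa using support_monomial_subset he
        subst this
        obtain ⟨p, hp⟩ := hS φ
        exact ⟨p, (hdx _).2 hp⟩
      rw [h, mem_isoTau_iff] at hδ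
      have hm : d ∈ (monomial d (1 : K)).support := by
        rw [support_monomial, if_neg one_ne_zero]
        exact Finset.mem_singleton_self _
      obtain ⟨ψ, hψ⟩ := hδ d hm
      exact ⟨ψ, fun q => (hdx _).1 (hψ q)⟩
  · rintro ⟨h1, h2⟩
    ext f
    rw [mem_isoDual_iff, mem_isoTau_iff]
    constructor
    · intro H d hd
      obtain ⟨ψ, hψ⟩ := h2 {x | d x ≠ 0} (fun φ => H φ d hd)
      exact ⟨ψ, hψ⟩
    · intro H φ d hd
      obtain ⟨ψ, hψ⟩ := H d hd
      obtain ⟨q, hq⟩ := h1 φ ψ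
      exact ⟨ψ q, by rw [hq]; exact hψ q⟩

end Red

section Zig
variable {P : Type*} [PartialOrder P]

/-- zig-zag connectivity relation -/
def zz (P : Type*) [PartialOrder P] : P → P → Prop :=
  Relation.ReflTransGen (fun x y : P => x ≤ y ∨ y ≤ x)

lemma zz_refl (a : P) : zz P a a := Relation.ReflTransGen.refl

lemma zz_of_le {a b : P} (h : a ≤ b) : zz P a b :=
  Relation.ReflTransGen.single (Or.inl h)

lemma zz_of_ge {a b : P} (h : b ≤ a) : zz P a b :=
  Relation.ReflTransGen.single (Or.inr h)

lemma zz_symm {a b : P} (h : zz P a b) : zz P b a :=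
  by haveI : Std.Symm (fun x y : P => x ≤ y ∨ y ≤ x) := ⟨fun _ _ hxy => hxy.symm⟩
     exact Relation.ReflTransGen.stdSymm.symm _ _ h

lemma zz_trans {a b c : P} (h : zz P a b) (h' : zz P b c) : zz P a c :=
  Relation.ReflTransGen.trans h h'

lemma zz_map {Q : Type*} [PartialOrder Q] (f : P →o Q) {a b : P} (h : zz P a b) :
    zz Q (f a) (f b) := by
  induction h with
  | refl => exact zz_refl _
  | tail _ hbc ih =>
      refine zz_trans ih ?_
      rcases hbc with h' | h'
      · exact zz_of_le (f.mono h')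
      · exact zz_of_ge (f.mono h')

/-- a minimal element is below everything zig-zag connected to it, in a rooted poset -/
lemma min_le_of_zz (hr : Rooted P) {r : P} (hmin : ∀ y : P, ¬ y < r) {x : P}
    (h : zz P r x) : r ≤ x := by
  induction h with
  | refl => exact le_rfl
  | @tail b c _ hbc ih =>
      rcases hbc with h' | h'
      · exact le_trans ih h'
      · -- c ≤ b, r ≤ b
        by_cases hrc : r ≤ c
        · exact hrc
        by_cases hcr : c ≤ r
        · rcases eq_or_lt_of_le hcr with h0 | h0
          · exact le_of_eq h0.symm
          · exact absurd h0 (hmin c)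
        · exfalso
          rcases eq_or_lt_of_le ih with h0 | h0
          · exact hcr (h0 ▸ h')
          rcases eq_or_lt_of_le h' with h1 | h1
          · exact hrc (h1 ▸ ih)
          exact hr r c b hrc hcr ⟨h0, h1⟩

lemma connected_rooted_bot (hc : PosetConnected P) (hr : Rooted P) [Finite P] [Nonempty P] :
    ∃ r : P, ∀ p : P, r ≤ p := by
  classical
  cases nonempty_fintype P
  obtain ⟨r, -, hrmin⟩ := exists_minimal_old Finset.univ ⟨Classical.arbitrary P, Finset.mem_univ _⟩
  exact ⟨r, fun p => min_le_of_zz hr (fun y hy => hrmin y (Finset.mem_univ y) hy) (hc r p)⟩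

lemma zz_comparable (hr : Rooted P) (hco : CoRooted P) {a b : P} (h : zz P a b) :
    a ≤ b ∨ b ≤ a := by
  induction h with
  | refl => exact Or.inl le_rfl
  | @tail b c _ hbc ih =>
      rcases ih with hab | hba
      · rcases hbc with hbc | hcb
        · exact Or.inl (le_trans hab hbc)
        · by_cases hac : a ≤ c
          · exact Or.inl hac
          by_cases hca : c ≤ a
          · exact Or.inr hca
          exfalso
          rcases eq_or_lt_of_le hab with h0 | h0
          · exact hca (hcb.trans (le_of_eq h0.symm))
          rcases eq_or_lt_of_le hcb with h1 | h1
          · exact hac (hab.trans (le_of_eq h1.symm))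
          exact hr a c b hac hca ⟨h0, h1⟩
      · rcases hbc with hbc | hcb
        · by_cases hac : a ≤ c
          · exact Or.inl hac
          by_cases hca : c ≤ a
          · exact Or.inr hca
          exfalso
          rcases eq_or_lt_of_le hba with h0 | h0
          · exact hac ((le_of_eq h0.symm).trans hbc)
          rcases eq_or_lt_of_le hbc with h1 | h1
          · exact hca ((le_of_eq h1.symm).trans hba)
          exact hco a c b hac hca ⟨h0, h1⟩
        · exact Or.inr (le_trans hcb hba)

lemma chain_connected (h : IsChainPoset P) : PosetConnected P :=
  fun a b => Relation.ReflTransGen.single (h a b)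

lemma chain_rooted (h : IsChainPoset P) : Rooted P :=
  fun p₁ p₂ _ h1 h2 _ => (h p₁ p₂).elim h1 h2

lemma chain_corooted (h : IsChainPoset P) : CoRooted P :=
  fun p₁ p₂ _ h1 h2 _ => (h p₁ p₂).elim h1 h2

lemma connected_rooted_corooted_chain (hc : PosetConnected P) (hr : Rooted P)
    (hco : CoRooted P) : IsChainPoset P :=
  fun a b => zz_comparable hr hco (hc a b)

end Zig

section Conds
variable (P Q : Type*) [PartialOrder P] [PartialOrder Q]

/-- fixed-point condition -/
def Cfix : Prop := ∀ (φ : P →o Q) (ψ : Q →o P), ∃ q, φ (ψ q) = q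

/-- selection condition -/
def Csel : Prop :=
  ∀ S : Set (P × Q), (∀ φ : P →o Q, ∃ p, (p, φ p) ∈ S) → ∃ ψ : Q →o P, ∀ q, (ψ q, q) ∈ S

end Conds

section Symm
variable {P Q : Type*} [PartialOrder P] [PartialOrder Q]

lemma Cfix.symm (h : Cfix P Q) : Cfix Q P := by
  intro φ ψ
  obtain ⟨q, hq⟩ := h ψ φ
  exact ⟨φ q, by rw [hq]⟩

lemma Csel.symm (h : Csel P Q) : Csel Q P := by
  intro S hS
  by_contra hno
  push_neg at hno
  have htr : ∀ φ : P →o Q, ∃ p, (p, φ p) ∈ {pq : P × Q | (pq.2, pq.1) ∉ S} := by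
    intro φ
    obtain ⟨p, hp⟩ := hno φ
    exact ⟨p, hp⟩
  obtain ⟨ψ, hψ⟩ := h _ htr
  obtain ⟨q, hq⟩ := hS ψ
  exact hψ q hq

end Symm

section Fix
variable {X : Type*} [PartialOrder X] [Finite X]

lemma fix_of_bot {r : X} (hr : ∀ x, r ≤ x) {f : X → X} (hf : Monotone f) :
    ∃ x, f x = x := by
  have hmono : Monotone fun n => f^[n] r := by
    apply monotone_nat_of_le_succ
    intro n
    rw [Function.iterate_succ_apply']
    induction n with
    | zero => exact hr _
    | succ m ih =>
        rw [Function.iterate_succ_apply' f m r]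
        exact hf ih
  obtain ⟨i, j, hij, hfij⟩ := Finite.exists_ne_map_eq_of_infinite fun n => f^[n] r
  rcases lt_or_gt_of_ne hij with h | h
  · refine ⟨f^[i] r, ?_⟩
    have h1 : f^[i] r ≤ f^[i+1] r := hmono (Nat.le_succ i)
    have h2 : f^[i+1] r ≤ f^[j] r := hmono h
    rw [← Function.iterate_succ_apply' f i r]
    exact le_antisymm (hfij ▸ h2) h1
  · refine ⟨f^[j] r, ?_⟩
    have h1 : f^[j] r ≤ f^[j+1] r := hmono (Nat.le_succ j)
    have h2 : f^[j+1] r ≤ f^[i] r := hmono h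
    rw [← Function.iterate_succ_apply' f j r]
    exact le_antisymm (hfij ▸ h2) h1

end Fix

section CfixCases
variable {P Q : Type*} [PartialOrder P] [PartialOrder Q] [Finite P] [Finite Q]
  [Nonempty P] [Nonempty Q]

lemma cfix_of_conn_rooted_left (hc : PosetConnected P) (hr : Rooted P) : Cfix P Q := by
  intro φ ψ
  obtain ⟨r, hr'⟩ := connected_rooted_bot hc hr
  obtain ⟨p, hp⟩ := fix_of_bot hr' (f := fun p => ψ (φ p)) (fun a b hab => ψ.mono (φ.mono hab))
  exact ⟨φ p, by rw [show ψ (φ p) = p from hp]⟩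

lemma cfix_of_conn_rooted_right (hc : PosetConnected Q) (hr : Rooted Q) : Cfix P Q := by
  intro φ ψ
  obtain ⟨r, hr'⟩ := connected_rooted_bot hc hr
  exact fix_of_bot hr' (f := fun q => φ (ψ q)) (fun a b hab => φ.mono (ψ.mono hab))

/-- `P` connected, `Q` sum of chains. -/
lemma cfix_of_conn_sumchain (hc : PosetConnected P) (hr : Rooted Q) (hco : CoRooted Q) :
    Cfix P Q := by
  intro φ ψ
  set q₀ : Q := φ (Classical.arbitrary P) with hq₀
  have hzz : ∀ q : Q, zz Q q₀ (φ (ψ q)) := fun q => zz_map φ (hc _ _)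
  -- the component of q₀ as a subtype
  let T := {x : Q // zz Q q₀ x}
  haveI : Nonempty T := ⟨⟨q₀, zz_refl _⟩⟩
  let f : T → T := fun x => ⟨φ (ψ x.1), hzz x.1⟩
  have hf : Monotone f := fun a b hab => φ.mono (ψ.mono hab)
  -- T is a finite nonempty chain, hence has a bottom
  have hchain : ∀ a b : T, a ≤ b ∨ b ≤ a := by
    intro a b
    have : zz Q a.1 b.1 := zz_trans (zz_symm a.2) b.2
    exact zz_comparable hr hco this
  cases nonempty_fintype T
  obtain ⟨rT, -, hrmin⟩ := exists_minimal_old Finset.univ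
    ⟨Classical.arbitrary T, Finset.mem_univ _⟩
  have hbot : ∀ x : T, rT ≤ x := by
    intro x
    rcases hchain rT x with h | h
    · exact h
    · rcases eq_or_lt_of_le h with h0 | h0
      · exact le_of_eq h0.symm
      · exact absurd h0 (hrmin x (Finset.mem_univ _))
  obtain ⟨x, hx⟩ := fix_of_bot hbot hf
  exact ⟨x.1, congrArg Subtype.val hx⟩

end CfixCases

/-- the zig-zag setoid -/
def zzSetoid (X : Type*) [PartialOrder X] : Setoid X :=
  Setoid.mk (zz X) ⟨zz_refl, fun h => zz_symm h, fun h h' => zz_trans h h'⟩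

section Glue
variable {X Y : Type*} [PartialOrder X] [PartialOrder Y]

/-- glue order homs defined on the zig-zag components -/
lemma glue_components (R : X → Y → Prop)
    (h : ∀ c : Quotient (zzSetoid X),
      ∃ f : {x : X // Quotient.mk _ x = c} →o Y, ∀ z, R z.1 (f z)) :
    ∃ F : X →o Y, ∀ x, R x (F x) := by
  classical
  set st : Setoid X := zzSetoid X with hst
  choose f hf using h
  have key : ∀ (c : Quotient st) (x : X) (hx : Quotient.mk st x = c)
      (y : X) (hy : Quotient.mk st y = c), x ≤ y → f c ⟨x, hx⟩ ≤ f c ⟨y, hy⟩ := by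
    intro c x hx y hy hxy
    exact (f c).mono (by exact_mod_cast hxy)
  refine ⟨⟨fun x => f (Quotient.mk st x) ⟨x, rfl⟩, ?_⟩, fun x => hf (Quotient.mk st x) ⟨x, rfl⟩⟩
  intro x y hxy
  have he : Quotient.mk st x = Quotient.mk st y := Quotient.sound (zz_of_le hxy)
  have : ∀ (c : Quotient st) (hx : Quotient.mk st x = c) (hy : Quotient.mk st y = c),
      f c ⟨x, hx⟩ ≤ f c ⟨y, hy⟩ := fun c hx hy => key c x hx y hy hxy
  have h2 := this (Quotient.mk st y) he rfl
  -- rewrite the left-hand side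
  have h3 : ∀ (c : Quotient st) (hx : Quotient.mk st x = c),
      f (Quotient.mk st x) ⟨x, rfl⟩ = f c ⟨x, hx⟩ := by
    intro c hx
    cases hx
    rfl
  calc f (Quotient.mk st x) ⟨x, rfl⟩ = f (Quotient.mk st y) ⟨x, he⟩ := h3 _ he
    _ ≤ f (Quotient.mk st y) ⟨y, rfl⟩ := h2

end Glue

section ChainCase
variable {P Q : Type*} [PartialOrder P] [PartialOrder Q] [Finite P] [Finite Q]
  [Nonempty P] [Nonempty Q]

open scoped Classical

lemma csel_of_chain (hch : IsChainPoset P) : Csel P Q := by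
  classical
  intro S htr
  -- the set of p admitting an S-avoiding isotone map below p with values ≤ q
  set Cset : Q → Set P := fun q =>
    {p | ∃ φ : P →o Q, (∀ x, x < p → (x, φ x) ∉ S) ∧ (∀ x, x < p → φ x ≤ q)} with hCset
  have hne : ∀ q, ∃ p, p ∈ Cset q := by
    intro q
    cases nonempty_fintype P
    obtain ⟨p₀, -, hmin⟩ := exists_minimal_old Finset.univ
      ⟨Classical.arbitrary P, Finset.mem_univ _⟩
    refine ⟨p₀, ⟨OrderHom.const _ (Classical.arbitrary Q), ?_, ?_⟩⟩
    · intro x hx; exact absurd hx (hmin x (Finset.mem_univ _))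
    · intro x hx; exact absurd hx (hmin x (Finset.mem_univ _))
  have hmax : ∀ q, ∃ p, p ∈ Cset q ∧ ∀ p' ∈ Cset q, p' ≤ p := by
    intro q
    cases nonempty_fintype P
    obtain ⟨p₀, hp₀⟩ := hne q
    obtain ⟨p, hp, hpm⟩ := exists_maximal_old (Finset.univ.filter (· ∈ Cset q))
      ⟨p₀, Finset.mem_filter.2 ⟨Finset.mem_univ _, hp₀⟩⟩
    refine ⟨p, (Finset.mem_filter.1 hp).2, ?_⟩
    intro p' hp'
    rcases hch p' p with h | h
    · exact h
    · rcases eq_or_lt_of_le h with h0 | h0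
      · exact le_of_eq h0.symm
      · exact absurd h0 (hpm p' (Finset.mem_filter.2 ⟨Finset.mem_univ _, hp'⟩))
  choose ψ0 hψ0 hψ0max using hmax
  have hmono : Monotone ψ0 := by
    intro q q' hqq'
    apply hψ0max q'
    obtain ⟨φ, h1, h2⟩ := hψ0 q
    exact ⟨φ, h1, fun x hx => (h2 x hx).trans hqq'⟩
  refine ⟨⟨ψ0, hmono⟩, ?_⟩
  intro q
  by_contra hns
  obtain ⟨φ, h1, h2⟩ := hψ0 q
  set p := ψ0 q with hp
  -- modified map
  set φ' : P → Q := fun x => if x < p then φ x else q with hφ'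
  have hφ'mono : Monotone φ' := by
    intro x y hxy
    by_cases hx : x < p <;> by_cases hy : y < p <;> simp only [hφ', hx, hy, if_pos, if_neg,
      if_true, if_false]
    · exact φ.mono hxy
    · exact h2 x hx
    · exact absurd (lt_of_le_of_lt hxy hy) hx
    · exact le_rfl
  have havoid : ∀ x, x ≤ p → (x, φ' x) ∉ S := by
    intro x hxp
    rcases eq_or_lt_of_le hxp with h0 | h0
    · subst h0
      simpa [hφ', lt_irrefl] using hns
    · simpa [hφ', h0] using h1 x h0
  by_cases htop : ∀ y, y ≤ p
  · obtain ⟨x, hx⟩ := htr ⟨φ', hφ'mono⟩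
    exact havoid x (htop x) hx
  · push_neg at htop
    obtain ⟨y, hy⟩ := htop
    have hpy : p < y := by
      rcases hch y p with h | h
      · exact absurd h hy
      · exact lt_of_le_of_ne h (fun h0 => hy (le_of_eq h0.symm))
    -- least element above p
    cases nonempty_fintype P
    obtain ⟨psucc, hpsuccmem, hpsuccmin⟩ := exists_minimal_old
      (Finset.univ.filter (fun z => p < z)) ⟨y, Finset.mem_filter.2 ⟨Finset.mem_univ _, hpy⟩⟩
    have hpsucc : p < psucc := (Finset.mem_filter.1 hpsuccmem).2
    have : psucc ∈ Cset q := by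
      refine ⟨⟨φ', hφ'mono⟩, ?_, ?_⟩
      · intro x hx
        have hxp : x ≤ p := by
          by_contra hxp
          have : p < x := by
            rcases hch x p with h | h
            · exact absurd h hxp
            · exact lt_of_le_of_ne h (fun h0 => hxp (le_of_eq h0.symm))
          exact absurd hx (hpsuccmin x (Finset.mem_filter.2 ⟨Finset.mem_univ _, this⟩))
        exact havoid x hxp
      · intro x hx
        have hxp : x ≤ p := by
          by_contra hxp
          have : p < x := by
            rcases hch x p with h | h
            · exact absurd h hxp
            · exact lt_of_le_of_ne h (fun h0 => hxp (le_of_eq h0.symm))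
          exact absurd hx (hpsuccmin x (Finset.mem_filter.2 ⟨Finset.mem_univ _, this⟩))
        show (if x < p then φ x else q) ≤ q
        rcases eq_or_lt_of_le hxp with h0 | h0
        · subst h0; simp
        · rw [if_pos h0]; exact h2 x h0
    exact absurd (hψ0max q psucc this) (not_le_of_gt hpsucc)

end ChainCase

section Core
open scoped Classical
variable {P Q : Type*} [PartialOrder P] [PartialOrder Q] [Fintype P] [Fintype Q]
  [Nonempty P] [Nonempty Q]

/-- comparability of elements below a common element in a rooted poset -/
lemma rooted_comp {P : Type*} [PartialOrder P] (hr : Rooted P) {x y p : P}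
    (hx : x < p) (hy : y < p) : x ≤ y ∨ y ≤ x := by
  by_contra h
  push_neg at h
  exact hr x y p h.1 h.2 ⟨hx, hy⟩

/-- `Apred S p q`: there is an `S`-avoiding isotone labelling of the subtree above `p`
starting with value `q`; defined by well-founded recursion downwards in size. -/
noncomputable def Apred (S : Set (P × Q)) : P → Q → Prop :=
  WellFounded.fix (C := fun _ => Q → Prop) (IsWellFounded.wf (α := P) (r := (· > ·)))
    (fun p rec => fun q => (p, q) ∉ S ∧ ∀ p', (h : p ⋖ p') → ∃ q', q ≤ q' ∧ rec p' h.lt q')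

lemma Apred_iff (S : Set (P × Q)) (p : P) (q : Q) :
    Apred S p q ↔ (p, q) ∉ S ∧ ∀ p', p ⋖ p' → ∃ q', q ≤ q' ∧ Apred S p' q' := by
  have h := WellFounded.fix_eq (C := fun _ => Q → Prop) (IsWellFounded.wf (α := P) (r := (· > ·)))
    (fun p rec => fun q => (p, q) ∉ S ∧ ∀ p', (h : p ⋖ p') → ∃ q', q ≤ q' ∧ rec p' h.lt q') p
  exact iff_of_eq (congrFun h q)

/-- `Bpred S p q` : no value `≥ q` admits an avoiding labelling above `p` -/
def Bpred (S : Set (P × Q)) (p : P) (q : Q) : Prop :=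
  ∀ q', q ≤ q' → ¬ Apred S p q'

lemma climb (hrP : Rooted P) (S : Set (P × Q)) :
    ∀ p q, Bpred S p q → ∃ p₁, p ≤ p₁ ∧ Bpred S p₁ q ∧ (p₁, q) ∈ S := by
  intro p
  refine WellFounded.induction (IsWellFounded.wf (α := P) (r := (· > ·)))
    (C := fun p => ∀ q, Bpred S p q → ∃ p₁, p ≤ p₁ ∧ Bpred S p₁ q ∧ (p₁, q) ∈ S) p ?_
  intro x IH q hB
  have hnA : ¬ Apred S x q := hB q le_rfl
  rw [Apred_iff] at hnA
  push_neg at hnA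
  by_cases hS : (x, q) ∈ S
  · exact ⟨x, le_rfl, hB, hS⟩
  · obtain ⟨p', hcov, hall⟩ := hnA hS
    have hB' : Bpred S p' q := by
      intro q' hq'
      exact hall q' hq'
    obtain ⟨p₁, h1, h2, h3⟩ := IH p' hcov.lt q hB'
    exact ⟨p₁, le_trans hcov.lt.le h1, h2, h3⟩

lemma LA_aux (hrP : Rooted P) (S : Set (P × Q)) :
    ∀ (n : ℕ) (D : Finset P) (φ : P → Q),
      (∀ x ∈ D, ∀ y, y ≤ x → y ∈ D) →
      (Finset.univ \ D).card = n →
      (∀ x ∈ D, ∀ y ∈ D, x ≤ y → φ x ≤ φ y) →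
      (∀ x ∈ D, (x, φ x) ∉ S) →
      (∀ p ∉ D, (∀ x, x < p → x ∈ D) →
        ∃ q', Apred S p q' ∧ ∀ x ∈ D, x < p → φ x ≤ q') →
      ∃ φ' : P →o Q, ∀ p, (p, φ' p) ∉ S := by
  intro n
  induction n with
  | zero =>
      intro D φ hdc hcard hiso hav _
      have hDuniv : ∀ x : P, x ∈ D := by
        intro x
        by_contra hx
        have : x ∈ Finset.univ \ D := Finset.mem_sdiff.2 ⟨Finset.mem_univ _, hx⟩
        rw [Finset.card_eq_zero] at hcard
        simp [hcard] at this
      exact ⟨⟨φ, fun x y h => hiso x (hDuniv x) y (hDuniv y) h⟩, fun p => hav p (hDuniv p)⟩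
  | succ n IH =>
      intro D φ hdc hcard hiso hav hinv
      classical
      have hne : (Finset.univ \ D).Nonempty := by
        rw [← Finset.card_pos, hcard]; omega
      obtain ⟨p0, hp0mem, hp0min⟩ := exists_minimal_old _ hne
      have hp0D : p0 ∉ D := (Finset.mem_sdiff.1 hp0mem).2
      have hfront : ∀ x, x < p0 → x ∈ D := by
        intro x hx
        by_contra hxD
        exact hp0min x (Finset.mem_sdiff.2 ⟨Finset.mem_univ _, hxD⟩) hx
      obtain ⟨q', hAq', hub⟩ := hinv p0 hp0D hfront
      have hq'S : (p0, q') ∉ S := ((Apred_iff S p0 q').1 hAq').1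
      set D' := insert p0 D with hD'
      set φ'' := Function.update φ p0 q' with hφ''
      have hφ''D : ∀ x ∈ D, φ'' x = φ x := by
        intro x hx
        refine Function.update_of_ne ?_ _ _
        rintro rfl; exact hp0D hx
      have hφ''p0 : φ'' p0 = q' := Function.update_self _ _ _
      apply IH D' φ''
      · -- down-closed
        intro x hx y hy
        rcases Finset.mem_insert.1 hx with h | h
        · subst h
          rcases eq_or_lt_of_le hy with h0 | h0
          · rw [h0]; exact Finset.mem_insert_self _ _
          · exact Finset.mem_insert_of_mem (hfront y h0)
        · exact Finset.mem_insert_of_mem (hdc x h y hy)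
      · -- cardinality
        have hset : Finset.univ \ D' = (Finset.univ \ D).erase p0 := by
          ext z
          simp only [hD', Finset.mem_sdiff, Finset.mem_univ, true_and, Finset.mem_erase,
            Finset.mem_insert]
          tauto
        rw [hset, Finset.card_erase_of_mem hp0mem, hcard]
        omega
      · -- isotone
        intro x hx y hy hxy
        rcases Finset.mem_insert.1 hx with h | h
        · rcases Finset.mem_insert.1 hy with h' | h'
          · rw [h, h']
          · exact absurd (hdc y h' p0 ((le_of_eq h.symm).trans hxy)) hp0D
        · rcases Finset.mem_insert.1 hy with h' | h'
          · have hxp0 : x ≤ p0 := hxy.trans (le_of_eq h')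
            rcases eq_or_lt_of_le hxp0 with h0 | h0
            · exact absurd (by rwa [h0] at h) hp0D
            · rw [h', hφ''D x h, hφ''p0]
              exact hub x h h0
          · rw [hφ''D x h, hφ''D y h']
            exact hiso x h y h' hxy
      · -- avoiding
        intro x hx
        rcases Finset.mem_insert.1 hx with h | h
        · rw [h, hφ''p0]; exact hq'S
        · rw [hφ''D x h]; exact hav x h
      · -- invariant
        intro p hpD' hfront'
        by_cases hp0p : p0 < p
        · have hcov : p0 ⋖ p := by
            refine ⟨hp0p, fun c h1 h2 => ?_⟩
            have hcD' : c ∈ D' := hfront' c h2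
            rcases Finset.mem_insert.1 hcD' with h | h
            · subst h; exact absurd h1 (lt_irrefl _)
            · exact hp0D (hdc c h p0 h1.le)
          obtain ⟨q'', hq'q'', hAq''⟩ := ((Apred_iff S p0 q').1 hAq').2 p hcov
          refine ⟨q'', hAq'', ?_⟩
          intro x hx hxp
          rcases Finset.mem_insert.1 hx with h | h
          · rw [h, hφ''p0]; exact hq'q''
          · rcases rooted_comp hrP hxp hp0p with h0 | h0
            · rcases eq_or_lt_of_le h0 with h1 | h1
              · exact absurd (by rwa [h1] at h) hp0D
              · rw [hφ''D x h]
                exact (hub x h h1).trans hq'q''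
            · exact absurd (hdc x h p0 h0) hp0D
        · have hpD : p ∉ D := fun h => hpD' (Finset.mem_insert_of_mem h)
          have hfr : ∀ x, x < p → x ∈ D := by
            intro x hx
            rcases Finset.mem_insert.1 (hfront' x hx) with h | h
            · exact absurd (by rwa [h] at hx) hp0p
            · exact h
          obtain ⟨q'', hAq'', hub''⟩ := hinv p hpD hfr
          refine ⟨q'', hAq'', ?_⟩
          intro x hx hxp
          rcases Finset.mem_insert.1 hx with h | h
          · exact absurd (by rwa [h] at hxp) hp0p
          · rw [hφ''D x h]
            exact hub'' x h hxp

lemma LB_aux (hrP : Rooted P) (hrQ : Rooted Q) (S : Set (P × Q)) :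
    ∀ (n : ℕ) (E : Finset Q) (ψ : Q → P),
      (∀ x ∈ E, ∀ y, y ≤ x → y ∈ E) →
      (Finset.univ \ E).card = n →
      (∀ x ∈ E, ∀ y ∈ E, x ≤ y → ψ x ≤ ψ y) →
      (∀ x ∈ E, (ψ x, x) ∈ S) →
      (∀ q ∉ E, (∀ x, x < q → x ∈ E) →
        ∃ p', Bpred S p' q ∧ ∀ x ∈ E, x < q → ψ x ≤ p') →
      ∃ ψ' : Q →o P, ∀ q, (ψ' q, q) ∈ S := by
  intro n
  induction n with
  | zero =>
      intro E ψ hdc hcard hiso hsel _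
      have hEuniv : ∀ x : Q, x ∈ E := by
        intro x
        by_contra hx
        have : x ∈ Finset.univ \ E := Finset.mem_sdiff.2 ⟨Finset.mem_univ _, hx⟩
        rw [Finset.card_eq_zero] at hcard
        simp [hcard] at this
      exact ⟨⟨ψ, fun x y h => hiso x (hEuniv x) y (hEuniv y) h⟩, fun q => hsel q (hEuniv q)⟩
  | succ n IH =>
      intro E ψ hdc hcard hiso hsel hinv
      classical
      have hne : (Finset.univ \ E).Nonempty := by
        rw [← Finset.card_pos, hcard]; omega
      obtain ⟨q0, hq0mem, hq0min⟩ := exists_minimal_old _ hne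
      have hq0E : q0 ∉ E := (Finset.mem_sdiff.1 hq0mem).2
      have hfront : ∀ x, x < q0 → x ∈ E := by
        intro x hx
        by_contra hxE
        exact hq0min x (Finset.mem_sdiff.2 ⟨Finset.mem_univ _, hxE⟩) hx
      obtain ⟨p', hBp', hub⟩ := hinv q0 hq0E hfront
      obtain ⟨p₁, hp'p₁, hBp₁, hp₁S⟩ := climb hrP S p' q0 hBp'
      set E' := insert q0 E with hE'
      set ψ'' := Function.update ψ q0 p₁ with hψ''
      have hψ''E : ∀ x ∈ E, ψ'' x = ψ x := by
        intro x hx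
        refine Function.update_of_ne ?_ _ _
        rintro rfl; exact hq0E hx
      have hψ''q0 : ψ'' q0 = p₁ := Function.update_self _ _ _
      apply IH E' ψ''
      · intro x hx y hy
        rcases Finset.mem_insert.1 hx with h | h
        · subst h
          rcases eq_or_lt_of_le hy with h0 | h0
          · rw [h0]; exact Finset.mem_insert_self _ _
          · exact Finset.mem_insert_of_mem (hfront y h0)
        · exact Finset.mem_insert_of_mem (hdc x h y hy)
      · have hset : Finset.univ \ E' = (Finset.univ \ E).erase q0 := by
          ext z
          simp only [hE', Finset.mem_sdiff, Finset.mem_univ, true_and, Finset.mem_erase,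
            Finset.mem_insert]
          tauto
        rw [hset, Finset.card_erase_of_mem hq0mem, hcard]
        omega
      · intro x hx y hy hxy
        rcases Finset.mem_insert.1 hx with h | h
        · rcases Finset.mem_insert.1 hy with h' | h'
          · rw [h, h']
          · exact absurd (hdc y h' q0 ((le_of_eq h.symm).trans hxy)) hq0E
        · rcases Finset.mem_insert.1 hy with h' | h'
          · have hxq0 : x ≤ q0 := hxy.trans (le_of_eq h')
            rcases eq_or_lt_of_le hxq0 with h0 | h0
            · exact absurd (by rwa [h0] at h) hq0E
            · rw [h', hψ''E x h, hψ''q0]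
              exact (hub x h h0).trans hp'p₁
          · rw [hψ''E x h, hψ''E y h']
            exact hiso x h y h' hxy
      · intro x hx
        rcases Finset.mem_insert.1 hx with h | h
        · rw [h, hψ''q0]; exact hp₁S
        · rw [hψ''E x h]; exact hsel x h
      · intro q hqE' hfront'
        by_cases hq0q : q0 < q
        · refine ⟨p₁, ?_, ?_⟩
          · intro q' hq'
            exact hBp₁ q' (le_trans hq0q.le hq')
          · intro x hx hxq
            rcases Finset.mem_insert.1 hx with h | h
            · rw [h, hψ''q0]
            · rcases rooted_comp hrQ hxq hq0q with h0 | h0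
              · rcases eq_or_lt_of_le h0 with h1 | h1
                · exact absurd (by rwa [h1] at h) hq0E
                · rw [hψ''E x h]
                  exact (hub x h h1).trans hp'p₁
              · exact absurd (hdc x h q0 h0) hq0E
        · have hqE : q ∉ E := fun h => hqE' (Finset.mem_insert_of_mem h)
          have hfr : ∀ x, x < q → x ∈ E := by
            intro x hx
            rcases Finset.mem_insert.1 (hfront' x hx) with h | h
            · exact absurd (by rwa [h] at hx) hq0q
            · exact h
          obtain ⟨p'', hBp'', hub''⟩ := hinv q hqE hfr
          refine ⟨p'', hBp'', ?_⟩
          intro x hx hxq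
          rcases Finset.mem_insert.1 hx with h | h
          · exact absurd (by rwa [h] at hxq) hq0q
          · rw [hψ''E x h]
            exact hub'' x h hxq

/-- Core theorem: both posets rooted with bottom elements. -/
theorem core_rooted (hrP : Rooted P) (hrQ : Rooted Q)
    (hbotP : ∃ rP : P, ∀ p, rP ≤ p) (hbotQ : ∃ rQ : Q, ∀ q, rQ ≤ q)
    (S : Set (P × Q)) (htr : ∀ φ : P →o Q, ∃ p, (p, φ p) ∈ S) :
    ∃ ψ : Q →o P, ∀ q, (ψ q, q) ∈ S := by
  classical
  obtain ⟨rP, hbP⟩ := hbotP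
  obtain ⟨rQ, hbQ⟩ := hbotQ
  by_cases hA : ∃ q0, Apred S rP q0
  · obtain ⟨q0, hq0⟩ := hA
    exfalso
    have : ∃ φ' : P →o Q, ∀ p, (p, φ' p) ∉ S := by
      apply LA_aux hrP S ((Finset.univ : Finset P) \ ∅).card ∅ (fun _ => Classical.arbitrary Q)
      · intro x hx; simp at hx
      · rfl
      · intro x hx; simp at hx
      · intro x hx; simp at hx
      · intro p _ hfr
        have hp : p = rP := by
          by_contra hne
          have : rP < p := lt_of_le_of_ne (hbP p) (Ne.symm hne)
          simpa using hfr rP this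
        subst hp
        exact ⟨q0, hq0, by simp⟩
    obtain ⟨φ', hφ'⟩ := this
    obtain ⟨p, hp⟩ := htr φ'
    exact hφ' p hp
  · push_neg at hA
    apply LB_aux hrP hrQ S ((Finset.univ : Finset Q) \ ∅).card ∅ (fun _ => Classical.arbitrary P)
    · intro x hx; simp at hx
    · rfl
    · intro x hx; simp at hx
    · intro x hx; simp at hx
    · intro q _ hfr
      have hq : q = rQ := by
        by_contra hne
        have : rQ < q := lt_of_le_of_ne (hbQ q) (Ne.symm hne)
        simpa using hfr rQ this
      subst hq
      refine ⟨rP, ?_, by simp⟩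
      intro q' _
      exact hA q'

end Core

section Components
variable {X : Type*} [PartialOrder X]

lemma class_zz {c : Quotient (zzSetoid X)} (x y : {z : X // Quotient.mk _ z = c}) :
    zz X x.1 y.1 :=
  Quotient.exact (x.2.trans y.2.symm)

lemma class_chain (hr : Rooted X) (hco : CoRooted X) (c : Quotient (zzSetoid X)) :
    IsChainPoset {z : X // Quotient.mk _ z = c} := by
  intro a b
  have := zz_comparable hr hco (class_zz a b)
  exact this.imp (fun h => h) (fun h => h)

lemma class_nonempty (c : Quotient (zzSetoid X)) :
    Nonempty {z : X // Quotient.mk _ z = c} :=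
  ⟨⟨c.out, Quotient.out_eq c⟩⟩

lemma class_rooted (hr : Rooted X) (c : Quotient (zzSetoid X)) :
    Rooted {z : X // Quotient.mk _ z = c} := by
  intro p₁ p₂ p h1 h2 ⟨l1, l2⟩
  refine hr p₁.1 p₂.1 p.1 ?_ ?_ ⟨?_, ?_⟩
  · exact fun h => h1 h
  · exact fun h => h2 h
  · exact lt_of_le_of_ne l1.le (fun h => l1.ne (Subtype.ext h))
  · exact lt_of_le_of_ne l2.le (fun h => l2.ne (Subtype.ext h))

lemma class_bot [Finite X] (hr : Rooted X) (c : Quotient (zzSetoid X)) :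
    ∃ r : {z : X // Quotient.mk _ z = c}, ∀ x, r ≤ x := by
  classical
  haveI := class_nonempty (X := X) c
  cases nonempty_fintype {z : X // Quotient.mk _ z = c}
  obtain ⟨r, -, hrmin⟩ := exists_minimal_old
    (Finset.univ : Finset {z : X // Quotient.mk _ z = c})
    ⟨Classical.arbitrary _, Finset.mem_univ _⟩
  have hminX : ∀ y : X, ¬ y < r.1 := by
    intro y hy
    have hyc : Quotient.mk (zzSetoid X) y = c := by
      rw [← r.2]
      exact Quotient.sound (zz_of_le hy.le)
    have : (⟨y, hyc⟩ : {z : X // Quotient.mk _ z = c}) < r :=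
      lt_of_le_of_ne hy.le (fun h => hy.ne (congrArg Subtype.val h))
    exact hrmin _ (Finset.mem_univ _) this
  refine ⟨r, fun x => ?_⟩
  have : zz X r.1 x.1 := class_zz r x
  exact min_le_of_zz hr hminX this

/-- inclusion of a component -/
def classIncl (c : Quotient (zzSetoid X)) : {z : X // Quotient.mk _ z = c} →o X :=
  ⟨Subtype.val, fun _ _ h => h⟩

end Components

section CselCases
variable {P Q : Type*} [PartialOrder P] [PartialOrder Q] [Fintype P] [Fintype Q]
  [Nonempty P] [Nonempty Q]

/-- both rooted implies the selection condition -/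
lemma csel_of_rooted (hrP : Rooted P) (hrQ : Rooted Q) : Csel P Q := by
  classical
  intro S htr
  by_cases hall : ∀ c : Quotient (zzSetoid P),
      ∃ φc : {z : P // Quotient.mk _ z = c} →o Q, ∀ z, (z.1, φc z) ∉ S
  · exfalso
    obtain ⟨φ, hφ⟩ := glue_components (fun p q => (p, q) ∉ S) hall
    obtain ⟨p, hp⟩ := htr φ
    exact hφ p hp
  · push_neg at hall
    obtain ⟨c₀, hc₀⟩ := hall
    set P' := {z : P // Quotient.mk _ z = c₀} with hP'
    haveI : Nonempty P' := class_nonempty c₀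
    haveI : Fintype P' := Fintype.ofFinite _
    have hrP' : Rooted P' := class_rooted hrP c₀
    have hbotP' : ∃ r : P', ∀ x, r ≤ x := class_bot hrP c₀
    have htr' : ∀ φ' : P' →o Q, ∃ z : P', (z.1, φ' z) ∈ S := fun φ' => hc₀ φ'
    -- now do the components of Q
    have hglue : ∀ d : Quotient (zzSetoid Q),
        ∃ ψd : {z : Q // Quotient.mk _ z = d} →o P', ∀ z, ((ψd z).1, z.1) ∈ S := by
      intro d
      set Qd := {z : Q // Quotient.mk _ z = d} with hQd
      haveI : Nonempty Qd := class_nonempty d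
      haveI : Fintype Qd := Fintype.ofFinite _
      have hrQd : Rooted Qd := class_rooted hrQ d
      have hbotQd : ∃ r : Qd, ∀ x, r ≤ x := class_bot hrQ d
      have htr'' : ∀ φ : P' →o Qd, ∃ z : P', (z, φ z) ∈
          {pq : P' × Qd | (pq.1.1, pq.2.1) ∈ S} := by
        intro φ
        obtain ⟨z, hz⟩ := htr' ((classIncl d).comp φ)
        exact ⟨z, hz⟩
      obtain ⟨ψd, hψd⟩ := core_rooted hrP' hrQd hbotP' hbotQd _ htr''
      exact ⟨ψd, fun z => hψd z⟩
    obtain ⟨ψ0, hψ0⟩ := glue_components (fun q (p : P') => (p.1, q) ∈ S) hglue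
    exact ⟨(classIncl c₀).comp ψ0, fun q => hψ0 q⟩

/-- `Q` a sum of chains implies the selection condition -/
lemma csel_of_sumchain (hrQ : Rooted Q) (hcoQ : CoRooted Q) : Csel P Q := by
  classical
  intro S htr
  have hglue : ∀ d : Quotient (zzSetoid Q),
      ∃ ψd : {z : Q // Quotient.mk _ z = d} →o P, ∀ z, (ψd z, z.1) ∈ S := by
    intro d
    set Qd := {z : Q // Quotient.mk _ z = d} with hQd
    haveI : Nonempty Qd := class_nonempty d
    haveI : Fintype Qd := Fintype.ofFinite _
    have hch : IsChainPoset Qd := class_chain hrQ hcoQ d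
    have hsel : Csel P Qd := (csel_of_chain hch).symm
    have htr'' : ∀ φ : P →o Qd, ∃ p, (p, φ p) ∈
        {pq : P × Qd | (pq.1, pq.2.1) ∈ S} := by
      intro φ
      obtain ⟨p, hp⟩ := htr ((classIncl d).comp φ)
      exact ⟨p, hp⟩
    obtain ⟨ψd, hψd⟩ := hsel _ htr''
    exact ⟨ψd, fun z => hψd z⟩
  obtain ⟨ψ, hψ⟩ := glue_components (fun q (p : P) => (p, q) ∈ S) hglue
  exact ⟨ψ, hψ⟩

end CselCases

section Duals
variable {P Q : Type*} [PartialOrder P] [PartialOrder Q]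

lemma conn_dual (h : PosetConnected P) : PosetConnected Pᵒᵈ := by
  intro a b
  exact Relation.ReflTransGen.mono (by intro x y hxy; exact hxy.symm) _ _
    (h (OrderDual.ofDual a) (OrderDual.ofDual b))

lemma rooted_dual (h : CoRooted P) : Rooted Pᵒᵈ := by
  intro p₁ p₂ p h1 h2 hl
  exact h (OrderDual.ofDual p₁) (OrderDual.ofDual p₂) (OrderDual.ofDual p)
    (fun hh => h2 hh) (fun hh => h1 hh)
    ⟨OrderDual.ofDual_lt_ofDual.2 hl.1, OrderDual.ofDual_lt_ofDual.2 hl.2⟩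

lemma corooted_dual (h : Rooted P) : CoRooted Pᵒᵈ := by
  intro p₁ p₂ p h1 h2 hl
  exact h (OrderDual.ofDual p₁) (OrderDual.ofDual p₂) (OrderDual.ofDual p)
    (fun hh => h2 hh) (fun hh => h1 hh)
    ⟨OrderDual.ofDual_lt_ofDual.2 hl.1, OrderDual.ofDual_lt_ofDual.2 hl.2⟩

lemma corooted_of_rooted_dual (h : Rooted Pᵒᵈ) : CoRooted P := by
  intro p₁ p₂ p h1 h2 hl
  exact h (OrderDual.toDual p₁) (OrderDual.toDual p₂) (OrderDual.toDual p)
    (fun hh => h2 hh) (fun hh => h1 hh)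
    ⟨OrderDual.toDual_lt_toDual.2 hl.1, OrderDual.toDual_lt_toDual.2 hl.2⟩

lemma rooted_of_corooted_dual (h : CoRooted Pᵒᵈ) : Rooted P := by
  intro p₁ p₂ p h1 h2 hl
  exact h (OrderDual.toDual p₁) (OrderDual.toDual p₂) (OrderDual.toDual p)
    (fun hh => h2 hh) (fun hh => h1 hh)
    ⟨OrderDual.toDual_lt_toDual.2 hl.1, OrderDual.toDual_lt_toDual.2 hl.2⟩

lemma csel_of_dual (h : Csel Pᵒᵈ Qᵒᵈ) : Csel P Q := by
  intro S htr
  have htr' : ∀ φ' : Pᵒᵈ →o Qᵒᵈ, ∃ p', (p', φ' p') ∈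
      {x : Pᵒᵈ × Qᵒᵈ | (OrderDual.ofDual x.1, OrderDual.ofDual x.2) ∈ S} := by
    intro φ'
    obtain ⟨p, hp⟩ := htr (OrderHom.dual.symm φ')
    exact ⟨OrderDual.toDual p, hp⟩
  obtain ⟨ψ', hψ'⟩ := h _ htr'
  exact ⟨OrderHom.dual.symm ψ', fun q => hψ' (OrderDual.toDual q)⟩

lemma csel_dual (h : Csel P Q) : Csel Pᵒᵈ Qᵒᵈ := by
  intro S htr
  have htr' : ∀ φ : P →o Q, ∃ p, (p, φ p) ∈
      {x : P × Q | (OrderDual.toDual x.1, OrderDual.toDual x.2) ∈ S} := by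
    intro φ
    obtain ⟨p', hp'⟩ := htr (OrderHom.dual φ)
    exact ⟨OrderDual.ofDual p', hp'⟩
  obtain ⟨ψ, hψ⟩ := h _ htr'
  exact ⟨OrderHom.dual ψ, fun q' => hψ (OrderDual.ofDual q')⟩

lemma cfix_of_dual (h : Cfix Pᵒᵈ Qᵒᵈ) : Cfix P Q := by
  intro φ ψ
  obtain ⟨q', hq'⟩ := h (OrderHom.dual φ) (OrderHom.dual ψ)
  exact ⟨OrderDual.ofDual q', congrArg OrderDual.ofDual hq'⟩

end Duals

section Obstructions
variable {P Q : Type*} [PartialOrder P] [PartialOrder Q]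

/-- if `P` is not rooted and `Q` is not co-rooted then the selection condition fails -/
lemma not_csel_of_not_rooted_not_corooted (hrP : ¬ Rooted P) (hcoQ : ¬ CoRooted Q) :
    ¬ Csel P Q := by
  simp only [Rooted, CoRooted, not_forall, not_not] at hrP hcoQ
  obtain ⟨a, b, c, hab, hba, hac, hbc⟩ := hrP
  obtain ⟨x, y, z, hxy, hyx, hzx, hzy⟩ := hcoQ
  intro hC
  set S : Set (P × Q) := {pq |
    (x ≤ pq.2 ∧ y ≤ pq.2 ∧ a ≤ pq.1 ∧ b ≤ pq.1) ∨
    (x ≤ pq.2 ∧ ¬ y ≤ pq.2 ∧ a ≤ pq.1 ∧ ¬ b ≤ pq.1) ∨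
    (y ≤ pq.2 ∧ ¬ x ≤ pq.2 ∧ b ≤ pq.1 ∧ ¬ a ≤ pq.1) ∨
    (¬ x ≤ pq.2 ∧ ¬ y ≤ pq.2 ∧
      ((a ≤ pq.1 ∧ ¬ b ≤ pq.1) ∨ (b ≤ pq.1 ∧ ¬ a ≤ pq.1)))} with hS
  have htr : ∀ φ : P →o Q, ∃ p, (p, φ p) ∈ S := by
    intro φ
    by_cases h1 : y ≤ φ a
    · by_cases h2 : x ≤ φ b
      · refine ⟨c, Or.inl ⟨?_, ?_, hac.le, hbc.le⟩⟩
        · exact h2.trans (φ.mono hbc.le)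
        · exact h1.trans (φ.mono hac.le)
      · -- p := b
        by_cases h3 : y ≤ φ b
        · exact ⟨b, Or.inr (Or.inr (Or.inl ⟨h3, h2, le_rfl, hab⟩))⟩
        · exact ⟨b, Or.inr (Or.inr (Or.inr ⟨h2, h3, Or.inr ⟨le_rfl, hab⟩⟩))⟩
    · by_cases h4 : x ≤ φ a
      · exact ⟨a, Or.inr (Or.inl ⟨h4, h1, le_rfl, hba⟩)⟩
      · exact ⟨a, Or.inr (Or.inr (Or.inr ⟨h4, h1, Or.inl ⟨le_rfl, hba⟩⟩))⟩
  obtain ⟨ψ, hψ⟩ := hC S htr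
  -- derive the constraints
  have hx' : a ≤ ψ x ∧ ¬ b ≤ ψ x := by
    have := hψ x
    rcases this with ⟨-, h, -⟩ | ⟨-, -, h⟩ | ⟨h, -⟩ | ⟨h, -⟩
    · exact absurd h hyx
    · exact h
    · exact absurd h hyx
    · exact absurd le_rfl h
  have hy' : b ≤ ψ y ∧ ¬ a ≤ ψ y := by
    have := hψ y
    rcases this with ⟨h, -⟩ | ⟨-, h, -⟩ | ⟨-, -, h⟩ | ⟨-, h, -⟩
    · exact absurd h hxy
    · exact absurd le_rfl h
    · exact h
    · exact absurd le_rfl h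
  have hz' := hψ z
  have hxz : ¬ x ≤ z := fun h => (lt_irrefl z) (lt_of_lt_of_le hzx h)
  have hyz : ¬ y ≤ z := fun h => (lt_irrefl z) (lt_of_lt_of_le hzy h)
  rcases hz' with ⟨h, -⟩ | ⟨h, -⟩ | ⟨h, -⟩ | ⟨-, -, hcase⟩
  · exact hxz h
  · exact hxz h
  · exact hyz h
  · rcases hcase with ⟨h1, -⟩ | ⟨h1, -⟩
    · exact hy'.2 (h1.trans (ψ.mono hzy.le))
    · exact hx'.2 (h1.trans (ψ.mono hzx.le))

/-- if both posets are disconnected then the fixed-point condition fails -/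
lemma not_cfix_of_disconnected (hcP : ¬ PosetConnected P) (hcQ : ¬ PosetConnected Q) :
    ¬ Cfix P Q := by
  classical
  simp only [PosetConnected, not_forall] at hcP hcQ
  obtain ⟨a, a', haa'⟩ := hcP
  obtain ⟨x, x', hxx'⟩ := hcQ
  intro hC
  have hzza : ∀ p p' : P, p ≤ p' → (zz P a p ↔ zz P a p') := by
    intro p p' h
    exact ⟨fun hh => zz_trans hh (zz_of_le h), fun hh => zz_trans hh (zz_of_ge h)⟩
  have hzzx : ∀ q q' : Q, q ≤ q' → (zz Q x q ↔ zz Q x q') := by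
    intro q q' h
    exact ⟨fun hh => zz_trans hh (zz_of_le h), fun hh => zz_trans hh (zz_of_ge h)⟩
  set φ : P →o Q := ⟨fun p => if zz P a p then x' else x, by
    intro p p' h
    simp only
    rw [if_congr (hzza p p' h) rfl rfl]⟩ with hφ
  set ψ : Q →o P := ⟨fun q => if zz Q x q then a else a', by
    intro q q' h
    simp only
    rw [if_congr (hzzx q q' h) rfl rfl]⟩ with hψ
  obtain ⟨q, hq⟩ := hC φ ψ
  by_cases hzq : zz Q x q
  · have hψq : ψ q = a := by rw [hψ]; exact if_pos hzq
    have : φ (ψ q) = x' := by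
      rw [hψq, hφ]; exact if_pos (zz_refl a)
    rw [this] at hq
    exact hxx' (hq ▸ hzq)
  · have hψq : ψ q = a' := by rw [hψ]; exact if_neg hzq
    have : φ (ψ q) = x := by
      rw [hψq]
      rw [hφ]
      exact if_neg (show ¬ zz P a a' from haa')
    rw [this] at hq
    exact hzq (hq ▸ zz_refl x)

end Obstructions

section Combo
variable (P Q : Type*) [PartialOrder P] [PartialOrder Q] [Fintype P] [Fintype Q]
  [Nonempty P] [Nonempty Q]

theorem combo :
    (Cfix P Q ∧ Csel P Q) ↔
      ((PosetConnected P ∨ PosetConnected Q) ∧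
        ((Rooted P ∧ Rooted Q) ∨
         (CoRooted P ∧ CoRooted Q) ∨
         (PosetConnected P ∧ Rooted Q ∧ CoRooted Q) ∨
         (PosetConnected Q ∧ Rooted P ∧ CoRooted P) ∨
         (IsChainPoset P ∨ IsChainPoset Q))) := by
  constructor
  · rintro ⟨hf, hs⟩
    have hconn : PosetConnected P ∨ PosetConnected Q := by
      by_contra h
      push_neg at h
      exact not_cfix_of_disconnected h.1 h.2 hf
    refine ⟨hconn, ?_⟩
    by_contra hno
    push_neg at hno
    obtain ⟨n1, n2, n3, n4, n5, n6⟩ := hno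
    have key : (¬ Rooted P ∧ ¬ CoRooted Q) ∨ (¬ CoRooted P ∧ ¬ Rooted Q) := by
      by_cases hrP : Rooted P
      · by_cases hcoP : CoRooted P
        · exfalso
          have hcQ : ¬ PosetConnected Q := fun hcQ => (n4 hcQ hrP) hcoP
          have hcP : PosetConnected P := hconn.resolve_right hcQ
          exact n5 (connected_rooted_corooted_chain hcP hrP hcoP)
        · have hrQ : ¬ Rooted Q := fun h => n1 hrP h
          exact Or.inr ⟨hcoP, hrQ⟩
      · by_cases hcoQ : CoRooted Q
        · by_cases hrQ : Rooted Q
          · exfalso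
            have hcP : ¬ PosetConnected P := fun hcP => (n3 hcP hrQ) hcoQ
            have hcQ : PosetConnected Q := hconn.resolve_left hcP
            exact n6 (connected_rooted_corooted_chain hcQ hrQ hcoQ)
          · have hcoP : ¬ CoRooted P := fun h => n2 h hcoQ
            exact Or.inr ⟨hcoP, hrQ⟩
        · exact Or.inl ⟨hrP, hcoQ⟩
    rcases key with ⟨h1, h2⟩ | ⟨h1, h2⟩
    · exact not_csel_of_not_rooted_not_corooted h1 h2 hs
    · have hd1 : ¬ Rooted Pᵒᵈ := fun hr => h1 (corooted_of_rooted_dual hr)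
      have hd2 : ¬ CoRooted Qᵒᵈ := fun hc => h2 (rooted_of_corooted_dual hc)
      exact not_csel_of_not_rooted_not_corooted hd1 hd2 (csel_dual hs)
  · rintro ⟨hconn, hcase⟩
    rcases hcase with ⟨hrP, hrQ⟩ | ⟨hcoP, hcoQ⟩ | ⟨hcP, hrQ, hcoQ⟩ | ⟨hcQ, hrP, hcoP⟩ |
      (hchP | hchQ)
    · refine ⟨?_, csel_of_rooted hrP hrQ⟩
      rcases hconn with hcP | hcQ
      · exact cfix_of_conn_rooted_left hcP hrP
      · exact cfix_of_conn_rooted_right hcQ hrQ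
    · refine ⟨?_, csel_of_dual (csel_of_rooted (rooted_dual hcoP) (rooted_dual hcoQ))⟩
      rcases hconn with hcP | hcQ
      · exact cfix_of_dual (cfix_of_conn_rooted_left (conn_dual hcP) (rooted_dual hcoP))
      · exact cfix_of_dual (cfix_of_conn_rooted_right (conn_dual hcQ) (rooted_dual hcoQ))
    · exact ⟨cfix_of_conn_sumchain hcP hrQ hcoQ, csel_of_sumchain hrQ hcoQ⟩
    · exact ⟨(cfix_of_conn_sumchain hcQ hrP hcoP).symm, (csel_of_sumchain hrP hcoP).symm⟩
    · exact ⟨cfix_of_conn_rooted_left (chain_connected hchP) (chain_rooted hchP),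
        csel_of_chain hchP⟩
    · exact ⟨cfix_of_conn_rooted_right (chain_connected hchQ) (chain_rooted hchQ),
        (csel_of_chain hchQ).symm⟩

end Combo

/-- Full classification: `L(P,Q)^∨ = L(Q,P)^τ` iff (`P` or `Q` is connected)
and one of: (i) both rooted; (ii) both co-rooted; (iii) `P` connected and `Q` a sum of chains;
(iv) `Q` connected and `P` a sum of chains; (v) `P` or `Q` is a chain. -/
theorem stmt_8 (P Q K : Type*) [PartialOrder P] [PartialOrder Q]
    [Fintype P] [Fintype Q] [Nonempty P] [Nonempty Q] [Field K] :
    isoDual P Q K = isoTau P Q K ↔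
      ((PosetConnected P ∨ PosetConnected Q) ∧
        ((Rooted P ∧ Rooted Q) ∨
         (CoRooted P ∧ CoRooted Q) ∨
         (PosetConnected P ∧ Rooted Q ∧ CoRooted Q) ∨
         (PosetConnected Q ∧ Rooted P ∧ CoRooted P) ∨
         (IsChainPoset P ∨ IsChainPoset Q))) := by
  exact (red P Q K).trans (combo P Q)
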